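/- The function h : [0, q^W) → (q^W, Q_max) defined implicitly by Δ(q, h(q)) = 0 with h(q) > q is continuous and strictly decreasing. -/

import Mathlib

/-- Relative payoff difference of a single deviation from a symmetric profile. -/
noncomputable def Delta (n : ℕ) (p c : ℝ → ℝ) (q q' : ℝ) : ℝ :=
  p (q' + ((n : ℝ) - 1) * q) * (q' - q) + c q - c q'


lemma deriv_contDiff {p : ℝ → ℝ} (hp : ContDiff ℝ 2 p) : ContDiff ℝ 1 (deriv p) := by
  have h2 : ContDiff ℝ ((1:ℕ) + 1) p := by exact_mod_cast hp
  exact (contDiff_succ_iff_deriv.mp h2).2.2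

lemma hasDerivAt_translate {p : ℝ → ℝ} (hp : Differentiable ℝ p) (a y : ℝ) :
    HasDerivAt (fun y : ℝ => p (y + a)) (deriv p (y + a)) y := by
  have := ((hp (y + a)).hasDerivAt).comp y ((hasDerivAt_id y).add_const a)
  exact this.congr_deriv (mul_one _)

/-- derivative of Delta in second variable -/
lemma hasDerivAt_Delta_snd {n : ℕ} {p c : ℝ → ℝ} (hp : Differentiable ℝ p)
    (hc : Differentiable ℝ c) (q y : ℝ) :
    HasDerivAt (Delta n p c q)
      (deriv p (y + ((n:ℝ)-1)*q) * (y - q) + p (y + ((n:ℝ)-1)*q) - deriv c y) y := by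
  have h1 := hasDerivAt_translate hp (((n:ℝ)-1)*q) y
  have h2 : HasDerivAt (fun y : ℝ => y - q) 1 y := (hasDerivAt_id y).sub_const q
  have h4 := ((h1.mul h2).add_const (c q)).sub (hc y).hasDerivAt
  have : Delta n p c q = fun y => p (y + ((n:ℝ)-1)*q) * (y - q) + c q - c y := rfl
  rw [this]
  exact h4.congr_deriv (by ring)

lemma deriv_Delta_snd {n : ℕ} {p c : ℝ → ℝ} (hp : Differentiable ℝ p)
    (hc : Differentiable ℝ c) (q : ℝ) :
    deriv (Delta n p c q) = fun y =>
      deriv p (y + ((n:ℝ)-1)*q) * (y - q) + p (y + ((n:ℝ)-1)*q) - deriv c y := by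
  funext y
  exact (hasDerivAt_Delta_snd hp hc q y).deriv

lemma deriv2_Delta_snd {n : ℕ} {p c : ℝ → ℝ} (hp : ContDiff ℝ 2 p)
    (hc : ContDiff ℝ 2 c) (q y : ℝ) :
    deriv^[2] (Delta n p c q) y =
      deriv (deriv p) (y + ((n:ℝ)-1)*q) * (y - q) + 2 * deriv p (y + ((n:ℝ)-1)*q)
        - deriv (deriv c) y := by
  have hpd := (deriv_contDiff hp).differentiable one_ne_zero
  have hcd := (deriv_contDiff hc).differentiable one_ne_zero
  have hp1 := hp.differentiable two_ne_zero
  set a := ((n:ℝ)-1)*q with ha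
  have h1 := hasDerivAt_translate hpd a y
  have h2 : HasDerivAt (fun y : ℝ => y - q) 1 y := (hasDerivAt_id y).sub_const q
  have h3 := hasDerivAt_translate hp1 a y
  have h4 := (((h1.mul h2).add h3).sub (hcd y).hasDerivAt)
  have hit : deriv^[2] (Delta n p c q) y = deriv (deriv (Delta n p c q)) y := rfl
  rw [hit, deriv_Delta_snd hp1 (hc.differentiable two_ne_zero) q]
  have := h4.deriv
  exact (h4.congr_deriv (by ring)).deriv

/-- derivative of Delta in the first variable, second fixed -/
lemma hasDerivAt_Delta_fst {n : ℕ} {p c : ℝ → ℝ} (hp : Differentiable ℝ p)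
    (hc : Differentiable ℝ c) (b q : ℝ) :
    HasDerivAt (fun q => Delta n p c q b)
      (deriv p (b + ((n:ℝ)-1)*q) * ((n:ℝ)-1) * (b - q) - p (b + ((n:ℝ)-1)*q) + deriv c q) q := by
  have h1 : HasDerivAt (fun q : ℝ => p (b + ((n:ℝ)-1)*q)) (deriv p (b + ((n:ℝ)-1)*q) * ((n:ℝ)-1)) q := by
    have hin : HasDerivAt (fun q : ℝ => b + ((n:ℝ)-1)*q) ((n:ℝ)-1) q := by
      simpa using ((hasDerivAt_id q).const_mul ((n:ℝ)-1)).const_add b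
    exact (hp _).hasDerivAt.comp q hin
  have h2 : HasDerivAt (fun q : ℝ => b - q) (-1) q := by
    simpa using (hasDerivAt_id q).const_sub b
  have h4 := ((h1.mul h2).add (hc q).hasDerivAt).sub_const (c b)
  have : (fun q => Delta n p c q b) = fun q => p (b + ((n:ℝ)-1)*q) * (b - q) + c q - c b := rfl
  rw [this]
  exact h4.congr_deriv (by ring)

/-- strict concave with zeros at a < b is negative after b -/
lemma concave_neg_after {g : ℝ → ℝ} {s : Set ℝ} (hg : StrictConcaveOn ℝ s g)
    {a b x : ℝ} (ha : a ∈ s) (hx : x ∈ s) (hab : a < b) (hbx : b < x)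
    (ga : g a = 0) (gb : g b = 0) : g x < 0 := by
  set t : ℝ := (x - b) / (x - a) with ht
  have hax : a < x := hab.trans hbx
  have h0t : 0 < t := div_pos (by linarith) (by linarith)
  have ht1 : 0 < 1 - t := by
    rw [ht]; rw [sub_pos, div_lt_one (by linarith : (0:ℝ) < x - a)]; linarith
  have hcomb : t • a + (1 - t) • x = b := by
    have hne : x - a ≠ 0 := ne_of_gt (by linarith)
    simp only [smul_eq_mul, ht]
    field_simp
    ring
  have := hg.2 ha hx (ne_of_lt hax) h0t ht1 (by ring)
  rw [hcomb, gb, ga] at this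
  simp only [smul_eq_mul] at this
  nlinarith

/-- strict concave with zeros at a < b is positive strictly between -/
lemma concave_pos_between {g : ℝ → ℝ} {s : Set ℝ} (hg : StrictConcaveOn ℝ s g)
    {a b y : ℝ} (ha : a ∈ s) (hb : b ∈ s) (hy : y ∈ Set.Ioo a b)
    (ga : g a = 0) (gb : g b = 0) : 0 < g y := by
  obtain ⟨hay, hyb⟩ := hy
  set t : ℝ := (b - y) / (b - a) with ht
  have hab : a < b := hay.trans hyb
  have h0t : 0 < t := div_pos (by linarith) (by linarith)
  have ht1 : 0 < 1 - t := by
    rw [ht]; rw [sub_pos, div_lt_one (by linarith : (0:ℝ) < b - a)]; linarith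
  have hcomb : t • a + (1 - t) • b = y := by
    have hne : b - a ≠ 0 := ne_of_gt (by linarith)
    simp only [smul_eq_mul, ht]
    field_simp
    ring
  have := hg.2 ha hb (ne_of_lt hab) h0t ht1 (by ring)
  rw [hcomb, ga, gb] at this
  simpa using this

lemma strictConcave_Delta {n : ℕ} (hn : 2 ≤ n) {Qmax : ℝ} {p c : ℝ → ℝ}
    (hp : ContDiff ℝ 2 p) (hc : ContDiff ℝ 2 c)
    (hp' : ∀ x ∈ Set.Icc (0:ℝ) Qmax, deriv p x < 0)
    (hp'' : ∀ x ∈ Set.Icc (0:ℝ) Qmax, deriv (deriv p) x ≤ 0)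
    (hc'' : ∀ x : ℝ, 0 ≤ x → 0 ≤ deriv (deriv c) x)
    {q : ℝ} (hq : 0 ≤ q) :
    StrictConcaveOn ℝ (Set.Icc q (Qmax - ((n:ℝ)-1)*q)) (Delta n p c q) := by
  have hm : (1:ℝ) ≤ (n:ℝ) - 1 := by
    have : (2:ℝ) ≤ (n:ℝ) := by exact_mod_cast hn
    linarith
  apply strictConcaveOn_of_deriv2_neg (convex_Icc _ _)
  · have : Continuous (Delta n p c q) := by
      have hpc := hp.continuous; have hcc := hc.continuous
      unfold Delta; fun_prop
    exact this.continuousOn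
  · intro y hy
    rw [interior_Icc] at hy
    obtain ⟨h1, h2⟩ := hy
    rw [deriv2_Delta_snd hp hc]
    have hyq : q < y := h1
    have hQ : y + ((n:ℝ)-1)*q ∈ Set.Icc (0:ℝ) Qmax := by
      constructor
      · nlinarith
      · nlinarith
    have e1 := hp' _ hQ
    have e2 := hp'' _ hQ
    have e3 := hc'' y (by linarith)
    nlinarith

lemma Delta_self (n : ℕ) (p c : ℝ → ℝ) (q : ℝ) : Delta n p c q q = 0 := by
  unfold Delta; ring

section Main
variable {n : ℕ} {Qmax qW : ℝ} {p c h : ℝ → ℝ}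

theorem main_statement
    (hn : 2 ≤ n) (hQmax : 0 < Qmax)
    (hp : ContDiff ℝ 2 p) (hc : ContDiff ℝ 2 c)
    (hp' : ∀ x ∈ Set.Icc (0:ℝ) Qmax, deriv p x < 0)
    (hp'' : ∀ x ∈ Set.Icc (0:ℝ) Qmax, deriv (deriv p) x ≤ 0)
    (hc'' : ∀ x : ℝ, 0 ≤ x → 0 ≤ deriv (deriv c) x)
    (hqW0 : 0 < qW) (hqWQ : (n : ℝ) * qW < Qmax)
    (hh : ∀ q ∈ Set.Ico (0:ℝ) qW,
      q < h q ∧ h q < Qmax - ((n : ℝ) - 1) * q ∧ qW < h q ∧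
      Delta n p c q (h q) = 0 ∧
      ∀ q' : ℝ, q < q' → Delta n p c q q' = 0 → q' = h q) :
    ContinuousOn h (Set.Ico 0 qW) ∧ StrictAntiOn h (Set.Ico 0 qW) := by
  have hm : (1:ℝ) ≤ (n:ℝ) - 1 := by
    have : (2:ℝ) ≤ (n:ℝ) := by exact_mod_cast hn
    linarith
  have hpd : Differentiable ℝ p := hp.differentiable two_ne_zero
  have hcd : Differentiable ℝ c := hc.differentiable two_ne_zero
  -- p is antitone on [0, Qmax]
  have hpanti : StrictAntiOn p (Set.Icc (0:ℝ) Qmax) := by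
    apply strictAntiOn_of_deriv_neg (convex_Icc _ _) hpd.continuous.continuousOn
    intro x hx
    rw [interior_Icc] at hx
    exact hp' x ⟨le_of_lt hx.1, le_of_lt hx.2⟩
  -- deriv c is monotone on [0, ∞)
  have hcmono : MonotoneOn (deriv c) (Set.Ici (0:ℝ)) := by
    apply monotoneOn_of_deriv_nonneg (convex_Ici _)
      ((deriv_contDiff hc).continuous.continuousOn)
      ((deriv_contDiff hc).differentiable one_ne_zero).differentiableOn
    intro x hx
    rw [interior_Ici] at hx
    exact hc'' x (le_of_lt hx)
  -- key claim: for q1 < q2 both in domain, Delta q1 (h q2) > 0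
  have key : ∀ q1 ∈ Set.Ico (0:ℝ) qW, ∀ q2 ∈ Set.Ico (0:ℝ) qW, q1 < q2 →
      0 < Delta n p c q1 (h q2) := by
    intro q1 hq1 q2 hq2 h12
    obtain ⟨hlt2, hub2, hqw2, hz2, _⟩ := hh q2 hq2
    set c0 := h q2 with hc0
    -- p (c0 + m q2) ≥ deriv c q2
    have hz2' : p (c0 + ((n:ℝ)-1)*q2) * (c0 - q2) = c c0 - c q2 := by
      unfold Delta at hz2; linarith
    have hpos : (0:ℝ) < c0 - q2 := by linarith
    have hmvt : deriv c q2 ≤ p (c0 + ((n:ℝ)-1)*q2) := by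
      obtain ⟨ξ, hξ, hslope⟩ := exists_hasDerivAt_eq_slope c (deriv c) hlt2
        hcd.continuous.continuousOn (fun x _ => (hcd x).hasDerivAt)
      have hle : deriv c q2 ≤ deriv c ξ :=
        hcmono hq2.1 (le_trans hq2.1 (le_of_lt hξ.1)) (le_of_lt hξ.1)
      rw [hslope] at hle
      have heq : (c c0 - c q2) / (c0 - q2) = p (c0 + ((n:ℝ)-1)*q2) := by
        rw [← hz2']
        field_simp
      rw [heq] at hle
      exact hle
    -- φ(q) = Delta q c0 is strictly decreasing on [q1, q2]
    have hQq2 : c0 + ((n:ℝ)-1)*q2 ∈ Set.Icc (0:ℝ) Qmax := by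
      constructor
      · nlinarith [hq2.1]
      · linarith
    have hphi : StrictAntiOn (fun q => Delta n p c q c0) (Set.Icc q1 q2) := by
      apply strictAntiOn_of_deriv_neg (convex_Icc _ _)
      · have hpc := hpd.continuous
        have hcc := hcd.continuous
        have : Continuous (fun q => Delta n p c q c0) := by unfold Delta; fun_prop
        exact this.continuousOn
      · intro x hx
        rw [interior_Icc] at hx
        rw [(hasDerivAt_Delta_fst hpd hcd c0 x).deriv]
        have hx0 : 0 ≤ x := le_trans hq1.1 (le_of_lt hx.1)
        have hxq2 : x < q2 := hx.2
        have hQx : c0 + ((n:ℝ)-1)*x ∈ Set.Icc (0:ℝ) Qmax := by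
          constructor
          · nlinarith
          · nlinarith
        have hple : p (c0 + ((n:ℝ)-1)*q2) < p (c0 + ((n:ℝ)-1)*x) := by
          apply hpanti hQx hQq2
          nlinarith
        have hcle : deriv c x ≤ deriv c q2 := hcmono hx0 hq2.1 (le_of_lt hxq2)
        have hdp : deriv p (c0 + ((n:ℝ)-1)*x) < 0 := hp' _ hQx
        have hprod : deriv p (c0 + ((n:ℝ)-1)*x) * (((n:ℝ)-1) * (c0 - x)) < 0 :=
          mul_neg_of_neg_of_pos hdp (by nlinarith)
        nlinarith
    have hq1mem : q1 ∈ Set.Icc q1 q2 := ⟨le_rfl, le_of_lt h12⟩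
    have hq2mem : q2 ∈ Set.Icc q1 q2 := ⟨le_of_lt h12, le_rfl⟩
    have := hphi hq1mem hq2mem h12
    simp only at this
    rw [hz2] at this
    exact this
  -- strict antitonicity
  have hanti : StrictAntiOn h (Set.Ico 0 qW) := by
    intro q1 hq1 q2 hq2 h12
    obtain ⟨hlt1, hub1, hqw1, hz1, huniq1⟩ := hh q1 hq1
    obtain ⟨hlt2, hub2, hqw2, hz2, _⟩ := hh q2 hq2
    have hkey := key q1 hq1 q2 hq2 h12
    by_contra hcon
    push_neg at hcon
    rcases eq_or_lt_of_le hcon with heq | hlt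
    · rw [← heq, hz1] at hkey
      exact lt_irrefl 0 hkey
    · have hsc := strictConcave_Delta hn hp hc hp' hp'' hc'' hq1.1
      have hmul : ((n:ℝ)-1)*q1 ≤ ((n:ℝ)-1)*q2 := by nlinarith
      have hxmem : h q2 ∈ Set.Icc q1 (Qmax - ((n:ℝ)-1)*q1) :=
        ⟨by linarith, by linarith⟩
      have hamem : q1 ∈ Set.Icc q1 (Qmax - ((n:ℝ)-1)*q1) := ⟨le_rfl, by linarith⟩
      have := concave_neg_after hsc hamem hxmem hlt1 hlt (Delta_self n p c q1) hz1
      linarith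
  refine ⟨?_, hanti⟩
  -- continuity
  intro q0 hq0
  obtain ⟨hlt0, hub0, hqw0, hz0, huniq0⟩ := hh q0 hq0
  set h0 := h q0 with hh0
  have hpc := hpd.continuous
  have hcc := hcd.continuous
  apply Metric.tendsto_nhds.mpr
  intro ε' hε'
  set ε := min ε' (min ((h0 - qW)/2) ((Qmax - ((n:ℝ)-1)*q0 - h0)/2)) with hε
  have hε1 : ε ≤ (h0 - qW)/2 := le_trans (min_le_right _ _) (min_le_left _ _)
  have hε2 : ε ≤ (Qmax - ((n:ℝ)-1)*q0 - h0)/2 := le_trans (min_le_right _ _) (min_le_right _ _)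
  have hε3 : ε ≤ ε' := min_le_left _ _
  have hε0 : 0 < ε := lt_min hε' (lt_min (by linarith) (by linarith))
  have hsc := strictConcave_Delta hn hp hc hp' hp'' hc'' hq0.1
  have hamem : q0 ∈ Set.Icc q0 (Qmax - ((n:ℝ)-1)*q0) := ⟨le_rfl, by linarith⟩
  have hbmem : h0 ∈ Set.Icc q0 (Qmax - ((n:ℝ)-1)*q0) := ⟨le_of_lt hlt0, by linarith⟩
  have hcmem : h0 + ε ∈ Set.Icc q0 (Qmax - ((n:ℝ)-1)*q0) := ⟨by linarith, by linarith⟩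
  have hpos0 : 0 < Delta n p c q0 (h0 - ε) := by
    apply concave_pos_between hsc hamem hbmem ⟨by linarith [hq0.2], by linarith⟩
      (Delta_self n p c q0) hz0
  have hneg0 : Delta n p c q0 (h0 + ε) < 0 :=
    concave_neg_after hsc hamem hcmem hlt0 (by linarith) (Delta_self n p c q0) hz0
  have hcont1 : Continuous (fun q => Delta n p c q (h0 - ε)) := by unfold Delta; fun_prop
  have hcont2 : Continuous (fun q => Delta n p c q (h0 + ε)) := by unfold Delta; fun_prop
  have hev1 : ∀ᶠ q in nhdsWithin q0 (Set.Ico 0 qW), 0 < Delta n p c q (h0 - ε) :=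
    nhdsWithin_le_nhds ((isOpen_lt continuous_const hcont1).mem_nhds hpos0)
  have hev2 : ∀ᶠ q in nhdsWithin q0 (Set.Ico 0 qW), Delta n p c q (h0 + ε) < 0 :=
    nhdsWithin_le_nhds ((isOpen_lt hcont2 continuous_const).mem_nhds hneg0)
  filter_upwards [hev1, hev2, self_mem_nhdsWithin] with q hq1pos hq2neg hqmem
  have hle : h0 - ε ≤ h0 + ε := by linarith
  have hcw : ContinuousOn (Delta n p c q) (Set.Icc (h0-ε) (h0+ε)) := by
    have : Continuous (Delta n p c q) := by unfold Delta; fun_prop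
    exact this.continuousOn
  have h0mem : (0:ℝ) ∈ Set.Icc (Delta n p c q (h0+ε)) (Delta n p c q (h0-ε)) :=
    ⟨le_of_lt hq2neg, le_of_lt hq1pos⟩
  obtain ⟨z, hzmem, hzval⟩ := intermediate_value_Icc' hle hcw h0mem
  have hne1 : z ≠ h0 - ε := by intro e; rw [e] at hzval; linarith
  have hne2 : z ≠ h0 + ε := by intro e; rw [e] at hzval; linarith
  have hz1' : h0 - ε < z := lt_of_le_of_ne hzmem.1 (Ne.symm hne1)
  have hz2' : z < h0 + ε := lt_of_le_of_ne hzmem.2 hne2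
  have hzq : q < z := by
    have := hqmem.2
    linarith
  have hzh : z = h q := (hh q hqmem).2.2.2.2 z hzq hzval
  rw [Real.dist_eq, ← hzh]
  rw [abs_sub_lt_iff]
  constructor <;> linarith

end Main

/-- The function `h` on `[0, q^W)`, defined implicitly by `Δ(q, h(q)) = 0` with
`h(q) > q` (the unique nontrivial zero), is continuous and strictly decreasing. -/
theorem h_continuous_strictAnti
    (n : ℕ) (hn : 2 ≤ n) (Qmax : ℝ) (hQmax : 0 < Qmax)
    (p c : ℝ → ℝ) (hp : ContDiff ℝ 2 p) (hc : ContDiff ℝ 2 c)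
    (hp' : ∀ x ∈ Set.Icc (0:ℝ) Qmax, deriv p x < 0)
    (hp'' : ∀ x ∈ Set.Icc (0:ℝ) Qmax, deriv (deriv p) x ≤ 0)
    (hc'' : ∀ x : ℝ, 0 ≤ x → 0 ≤ deriv (deriv c) x)
    (qW : ℝ) (hqW0 : 0 < qW) (hqWQ : (n : ℝ) * qW < Qmax)
    (h : ℝ → ℝ)
    (hh : ∀ q ∈ Set.Ico (0:ℝ) qW,
      q < h q ∧ h q < Qmax - ((n : ℝ) - 1) * q ∧ qW < h q ∧
      Delta n p c q (h q) = 0 ∧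
      ∀ q' : ℝ, q < q' → Delta n p c q q' = 0 → q' = h q) :
    ContinuousOn h (Set.Ico 0 qW) ∧ StrictAntiOn h (Set.Ico 0 qW) := by
  exact main_statement hn hQmax hp hc hp' hp'' hc'' hqW0 hqWQ hh
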